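/- There exists a unimodular 18×18 integer matrix U_1 such that ᵗU_1 M_1 U_1 = E_8(-1) ⊕ E_8(-1) ⊕ [[0,3],[3,0]], where M_1 is as defined. -/

import Mathlib

open Matrix

noncomputable section

def A18 : Matrix (Fin 18) (Fin 18) ℤ :=
  Matrix.of fun i j => if i = j then -2 else if i.val + 1 = j.val ∨ j.val + 1 = i.val then 1 else 0

def E (i j : Fin 18) : Matrix (Fin 18) (Fin 18) ℤ := Matrix.single i j 1

def M1 : Matrix (Fin 18) (Fin 18) ℤ :=
  A18 - (E 7 8 + E 8 7) - (E 13 14 + E 14 13) + (E 12 14 + E 14 12)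
    + (E 2 16 + E 16 2) + (E 13 16 + E 16 13) - (E 15 16 + E 16 15)
    + (E 15 17 + E 17 15) - (E 14 15 + E 15 14) + 2 • E 17 17

def E8neg : Matrix (Fin 8) (Fin 8) ℤ :=
  !![-2,1,0,0,0,0,0,0; 1,-2,1,0,0,0,0,0; 0,1,-2,1,0,0,0,0; 0,0,1,-2,1,0,0,0;
     0,0,0,1,-2,1,1,0; 0,0,0,0,1,-2,0,0; 0,0,0,0,1,0,-2,1; 0,0,0,0,0,0,1,-2]

def e18 : (Fin 8 ⊕ (Fin 8 ⊕ Fin 2)) ≃ Fin 18 :=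
  (Equiv.sumCongr (Equiv.refl (Fin 8)) finSumFinEquiv).trans finSumFinEquiv

def target1 : Matrix (Fin 18) (Fin 18) ℤ :=
  Matrix.reindex e18 e18
    (Matrix.fromBlocks E8neg 0 0 (Matrix.fromBlocks E8neg 0 0 !![0,3;3,0]))


def Umat : Matrix (Fin 18) (Fin 18) ℤ :=
  !![2, 0, 0, -1, 1, -1, -2, 4, -3, 4, -1, -1, -5, 9, 0, 3, -2, -49;
    0, 0, 0, 0, 0, 0, 0, 0, -2, 2, 0, 0, -4, 6, 0, 2, -1, -23;
    2, 0, 0, -1, 1, -1, -2, 4, -5, 5, 0, -1, -9, 14, 1, 4, -3, -63;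
    0, 0, 0, 0, 0, 0, 0, 0, -3, 2, 1, 0, -5, 6, 1, 2, -1, -25;
    2, 0, 0, -1, 1, -1, -1, 2, -4, 4, 0, -1, -6, 9, 1, 3, -2, -44;
    0, 0, 0, 0, 0, 0, 1, -2, -1, 0, 1, 1, -2, 1, 0, 1, 0, 0;
    -2, 0, 0, 1, -1, 1, 3, -6, 2, -4, 2, 2, 2, -6, 0, -2, 2, 38;
    -1, 0, 0, 1, -1, 0, 2, -3, 1, -2, 1, 1, 1, -3, 0, -1, 1, 19;
    2, 0, 0, -1, 1, -1, -2, 4, -3, 4, 0, -2, -4, 8, 0, 2, -2, -42;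
    0, 1, 0, -1, 0, 0, 0, 1, -2, 2, 1, -1, -3, 5, 0, 1, -1, -21;
    -2, 1, 1, -1, 0, 0, 1, -2, -1, 0, 2, 0, -2, 2, 0, 0, 0, 0;
    -3, 0, 2, -1, -1, 1, 3, -5, 0, -2, 3, 1, -1, -1, 0, -1, 1, 21;
    -1, 0, 2, -2, 0, 0, 1, -1, -4, 2, 2, 0, -5, 7, 0, 1, -1, -21;
    0, 0, 1, -1, 0, 0, 0, 0, -3, 2, 1, 0, -4, 6, 0, 1, -1, -21;
    1, 0, 1, -2, 1, -1, -1, 3, -4, 4, 0, -1, -5, 9, 0, 2, -2, -42;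
    3, 0, -1, -1, 2, -2, -3, 6, -2, 4, -2, -2, -2, 6, 0, 2, -2, -42;
    4, 0, 0, -2, 2, -2, -4, 8, -6, 8, -2, -2, -9, 16, 1, 4, -4, -84;
    6, 0, -1, -2, 3, -3, -6, 12, -4, 8, -4, -4, -4, 12, 0, 4, -4, -84]

def Vmat : Matrix (Fin 18) (Fin 18) ℤ :=
  !![4, -4, 0, -4, 4, 0, -3, 0, 4, 0, 0, -4, 0, -4, 4, -1, 0, -7;
    4, -4, 0, -4, 4, 0, -3, 0, 4, 0, 1, -5, 0, -5, 5, -2, 0, -7;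
    4, -4, 0, -4, 4, 0, -3, 0, 5, -1, 1, -5, 0, -6, 6, -3, 0, -7;
    4, -4, 0, -4, 4, 0, -3, 0, 6, -1, 1, -6, 0, -7, 7, -3, 0, -8;
    6, -6, 0, -6, 6, 0, -4, -1, 8, -1, 1, -8, 0, -10, 10, -3, 0, -12;
    2, -2, 0, -2, 2, 0, -1, -1, 3, 0, 0, -3, 0, -4, 4, -2, 0, -4;
    4, -4, 0, -4, 4, 0, -3, 0, 5, 0, 0, -5, 0, -7, 7, -2, 0, -8;
    6, -6, 0, -5, 5, 0, -5, 0, 6, 0, 0, -6, 0, -7, 7, -1, 0, -11;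
    0, 0, 0, 0, 0, 0, 0, 0, 0, 0, 0, 1, -2, 1, 1, 0, 0, 0;
    4, -4, -1, -3, 4, 0, -4, 0, 4, 0, 0, -3, -3, -2, 6, 0, 0, -8;
    2, -3, 0, -1, 2, 0, -2, 0, 2, 0, 0, -1, -4, 1, 5, 0, -1, -4;
    2, -3, 0, -1, 2, 0, -2, 0, 1, 0, 0, -1, -5, 2, 6, 0, -1, -4;
    4, -5, 0, -3, 5, -1, -4, 0, 3, 0, 0, -3, -6, 1, 9, 0, -2, -8;
    8, -8, 0, -7, 8, -1, -7, 0, 7, 0, 0, -7, -3, -5, 10, 0, -1, -15;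
    4, -5, 0, -3, 5, -1, -4, 0, 3, 0, 0, -3, -4, -1, 7, 0, -1, -8;
    4, -4, 0, -3, 4, 0, -4, 0, 3, 0, 0, -3, -2, -2, 5, 0, -1, -7;
    25, -22, -2, -19, 21, -2, -19, 0, 21, 0, 0, -21, 0, -21, 21, 0, 0, -42;
    1, -1, 0, -1, 1, 0, -1, 0, 1, 0, 0, -1, 0, -1, 1, 0, 0, -2]

set_option maxHeartbeats 4000000 in
lemma UV : Umat * Vmat = 1 := by
  have h : ∀ i j, (Umat * Vmat) i j = (1 : Matrix (Fin 18) (Fin 18) ℤ) i j := by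
    letI : ∀ i j : Fin 18, Decidable ((Umat * Vmat) i j = (1 : Matrix (Fin 18) (Fin 18) ℤ) i j) :=
      fun i j => inferInstance
    decide
  exact Matrix.ext h

set_option maxHeartbeats 4000000 in
lemma gr0 : ∀ j, (Umatᵀ * M1 * Umat) 0 j = target1 0 j := by decide
set_option maxHeartbeats 4000000 in
lemma gr1 : ∀ j, (Umatᵀ * M1 * Umat) 1 j = target1 1 j := by decide
set_option maxHeartbeats 4000000 in
lemma gr2 : ∀ j, (Umatᵀ * M1 * Umat) 2 j = target1 2 j := by decide
set_option maxHeartbeats 4000000 in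
lemma gr3 : ∀ j, (Umatᵀ * M1 * Umat) 3 j = target1 3 j := by decide
set_option maxHeartbeats 4000000 in
lemma gr4 : ∀ j, (Umatᵀ * M1 * Umat) 4 j = target1 4 j := by decide
set_option maxHeartbeats 4000000 in
lemma gr5 : ∀ j, (Umatᵀ * M1 * Umat) 5 j = target1 5 j := by decide
set_option maxHeartbeats 4000000 in
lemma gr6 : ∀ j, (Umatᵀ * M1 * Umat) 6 j = target1 6 j := by decide
set_option maxHeartbeats 4000000 in
lemma gr7 : ∀ j, (Umatᵀ * M1 * Umat) 7 j = target1 7 j := by decide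
set_option maxHeartbeats 4000000 in
lemma gr8 : ∀ j, (Umatᵀ * M1 * Umat) 8 j = target1 8 j := by decide
set_option maxHeartbeats 4000000 in
lemma gr9 : ∀ j, (Umatᵀ * M1 * Umat) 9 j = target1 9 j := by decide
set_option maxHeartbeats 4000000 in
lemma gr10 : ∀ j, (Umatᵀ * M1 * Umat) 10 j = target1 10 j := by decide
set_option maxHeartbeats 4000000 in
lemma gr11 : ∀ j, (Umatᵀ * M1 * Umat) 11 j = target1 11 j := by decide
set_option maxHeartbeats 4000000 in
lemma gr12 : ∀ j, (Umatᵀ * M1 * Umat) 12 j = target1 12 j := by decide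
set_option maxHeartbeats 4000000 in
lemma gr13 : ∀ j, (Umatᵀ * M1 * Umat) 13 j = target1 13 j := by decide
set_option maxHeartbeats 4000000 in
lemma gr14 : ∀ j, (Umatᵀ * M1 * Umat) 14 j = target1 14 j := by decide
set_option maxHeartbeats 4000000 in
lemma gr15 : ∀ j, (Umatᵀ * M1 * Umat) 15 j = target1 15 j := by decide
set_option maxHeartbeats 4000000 in
lemma gr16 : ∀ j, (Umatᵀ * M1 * Umat) 16 j = target1 16 j := by decide
set_option maxHeartbeats 4000000 in
lemma gr17 : ∀ j, (Umatᵀ * M1 * Umat) 17 j = target1 17 j := by decide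

lemma Ugram : Umatᵀ * M1 * Umat = target1 := by
  apply Matrix.ext
  intro i j
  fin_cases i
  · exact gr0 j
  · exact gr1 j
  · exact gr2 j
  · exact gr3 j
  · exact gr4 j
  · exact gr5 j
  · exact gr6 j
  · exact gr7 j
  · exact gr8 j
  · exact gr9 j
  · exact gr10 j
  · exact gr11 j
  · exact gr12 j
  · exact gr13 j
  · exact gr14 j
  · exact gr15 j
  · exact gr16 j
  · exact gr17 j

theorem stmt3 : ∃ U : Matrix (Fin 18) (Fin 18) ℤ,
    (U.det = 1 ∨ U.det = -1) ∧ Uᵀ * M1 * U = target1 :=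
  ⟨Umat, Int.isUnit_iff.mp (Matrix.isUnit_det_of_right_inverse UV), Ugram⟩
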